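/- For any finite Coxeter group W with generators S and any s_i in S, the minimum number of occurrences of s_i among all reduced words of an element w equals the number k of steps taken by the following algorithm to reach the identity: set w^{(0)} = w^{J_i} (the minimal coset representative of w modulo the parabolic subgroup W_{J_i} with J_i = S \ {s_i}), and for each step set w^{(k+1)} = (w^{(k)} s_i)^{J_i} while w^{(k)} ≠ id. -/

import Mathlib

/-- `u` is the minimal-length representative of the coset `w · W_J`, where
`J = S \ {sᵢ}` is the set of simple reflections other than `sᵢ`. -/
def IsMinCosetRep {B : Type*} {W : Type*} [Group W] {M : CoxeterMatrix B}
    (cs : CoxeterSystem M W) (i : B) (w u : W) : Prop :=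
  (∃ v ∈ Subgroup.closure (cs.simple '' {j | j ≠ i}), u = w * v) ∧
    ∀ u' : W, (∃ v ∈ Subgroup.closure (cs.simple '' {j | j ≠ i}), u' = w * v) →
      cs.length u ≤ cs.length u'

namespace CoxAux
set_option linter.unusedSectionVars false

open List CoxeterSystem

variable {B : Type*} {W : Type*} [Group W] {M : CoxeterMatrix B} (cs : CoxeterSystem M W)

local prefix:100 "S" => cs.simple
local prefix:100 "π" => cs.wordProd
local prefix:100 "ℓ" => cs.length
local prefix:100 "ris" => cs.rightInvSeq

open Classical in
noncomputable def sgn (t : W) (l : List W) : ℤˣ :=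
  (l.map (fun x => if x = t then (-1 : ℤˣ) else 1)).prod

@[simp] lemma sgn_nil (t : W) : sgn t ([] : List W) = 1 := rfl

open Classical in
lemma sgn_cons (t x : W) (l : List W) :
    sgn t (x :: l) = (if x = t then (-1 : ℤˣ) else 1) * sgn t l := by
  simp [sgn]

lemma sgn_append (t : W) (l₁ l₂ : List W) :
    sgn t (l₁ ++ l₂) = sgn t l₁ * sgn t l₂ := by
  simp [sgn]

lemma sgn_reverse (t : W) (l : List W) : sgn t l.reverse = sgn t l := by
  induction l with
  | nil => rfl
  | cons x l ih =>
    rw [reverse_cons, sgn_append, sgn_cons, ih, sgn_cons, sgn_nil, mul_one, mul_comm]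

lemma sgn_eq_one_of_not_mem (t : W) (l : List W) (h : t ∉ l) : sgn t l = 1 := by
  induction l with
  | nil => rfl
  | cons x l ih =>
    rw [sgn_cons, if_neg (by rintro rfl; exact h mem_cons_self),
      ih (fun hm => h (mem_cons_of_mem _ hm)), one_mul]

lemma mem_of_sgn_ne_one {t : W} {l : List W} (h : sgn t l ≠ 1) : t ∈ l := by
  by_contra hm
  exact h (sgn_eq_one_of_not_mem t l hm)

open Classical in
/-- The sign permutation associated to a generator. -/
noncomputable def nu (i : B) : Equiv.Perm (W × ℤˣ) :=
  Function.Involutive.toPerm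
    (fun p => (S i * p.1 * S i, if p.1 = S i then -p.2 else p.2))
    (by
      rintro ⟨t, ε⟩
      by_cases h : t = S i
      · simp [h, cs.simple_mul_simple_self]
      · have h2 : ¬ (S i * t * S i = S i) := by
          intro he
          apply h
          have := congrArg (fun z => S i * z * S i) he
          simpa [mul_assoc, cs.simple_mul_simple_cancel_left,
            cs.simple_mul_simple_self] using this
        simp only [h, if_neg, h2, ite_false]
        simp [mul_assoc, cs.simple_mul_simple_self, cs.simple_mul_simple_cancel_left])

open Classical in
lemma nu_apply (i : B) (t : W) (ε : ℤˣ) :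
    (nu cs i) (t, ε) = (S i * t * S i, if t = S i then -ε else ε) := rfl

lemma rightInvSeq_cons (i : B) (ω : List B) :
    ris (i :: ω) = ((π ω)⁻¹ * S i * π ω) :: ris ω := rfl

open Classical in
lemma prod_map_nu_apply (ω : List B) (t : W) (ε : ℤˣ) :
    ((ω.map (nu cs)).prod) (t, ε) = (π ω * t * (π ω)⁻¹, sgn t (ris ω) * ε) := by
  induction ω generalizing ε with
  | nil => simp [sgn]
  | cons i ω ih =>
    rw [map_cons, prod_cons, Equiv.Perm.mul_apply, ih, nu_apply, rightInvSeq_cons, sgn_cons]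
    simp only [Prod.mk.injEq]
    have hiff : (π ω * t * (π ω)⁻¹ = S i) ↔ ((π ω)⁻¹ * S i * π ω = t) := by
      constructor
      · intro h
        rw [← h]; group
      · intro h
        rw [← h]; group
    refine ⟨?_, ?_⟩
    · rw [cs.wordProd_cons, mul_inv_rev, cs.inv_simple]
      group
    · by_cases h : (π ω)⁻¹ * S i * π ω = t
      · rw [if_pos (hiff.mpr h), if_pos h]
        simp [neg_mul]
      · rw [if_neg (fun hh => h (hiff.mp hh)), if_neg h, one_mul]

lemma shuffle (x y : W) (n : ℕ) : x * (y * x) ^ n = (x * y) ^ n * x := by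
  induction n with
  | zero => simp
  | succ n ih =>
    rw [pow_succ, ← mul_assoc, ih, pow_succ]
    group

/-- The alternating word `[i, j, i, j, ...]` of length `2 * m`. -/
def altL (i j : B) : ℕ → List B
  | 0 => []
  | m + 1 => i :: j :: altL i j m

lemma prod_map_nu_altL (i j : B) (m : ℕ) :
    ((altL i j m).map (nu cs)).prod = (nu cs i * nu cs j) ^ m := by
  induction m with
  | zero => rfl
  | succ m ih =>
    rw [altL, map_cons, map_cons, prod_cons, prod_cons, ih, pow_succ', mul_assoc]

lemma wordProd_altL (i j : B) (m : ℕ) :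
    π (altL i j m) = (S i * S j) ^ m := by
  induction m with
  | zero => simp [altL]
  | succ m ih =>
    rw [altL, cs.wordProd_cons, cs.wordProd_cons, ih, pow_succ', mul_assoc]

lemma ris_altL (i j : B) (m : ℕ) :
    ris (altL i j m) =
      ((List.range (2 * m)).reverse).map (fun k => (S j * S i) ^ k * S j) := by
  have hinv : ∀ n : ℕ, ((S i * S j) ^ n)⁻¹ = (S j * S i) ^ n := by
    intro n
    rw [← inv_pow, mul_inv_rev, cs.inv_simple, cs.inv_simple]
  induction m with
  | zero => simp [altL]
  | succ m ih =>
    have h2 : 2 * (m + 1) = (2 * m + 1) + 1 := by ring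
    rw [altL, rightInvSeq_cons, rightInvSeq_cons, ih, h2, List.range_succ, List.range_succ]
    simp only [List.reverse_append, List.reverse_cons, List.reverse_nil, List.nil_append,
      List.cons_append, List.map_cons]
    congr 1
    · -- (π (j :: altL i j m))⁻¹ * S i * π (j :: altL i j m) = (S j * S i)^(2m+1) * S j
      rw [cs.wordProd_cons, wordProd_altL]
      rw [mul_inv_rev, hinv, cs.inv_simple]
      calc (S j * S i) ^ m * S j * S i * (S j * (S i * S j) ^ m)
          = (S j * S i) ^ m * (S j * S i) * (S j * (S i * S j) ^ m) := by group
        _ = (S j * S i) ^ m * (S j * S i) * ((S j * S i) ^ m * S j) := by rw [shuffle]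
        _ = (S j * S i) ^ (2 * m + 1) * S j := by
            rw [show 2 * m + 1 = (m + 1) + m by ring, pow_add, pow_succ]
            group
    congr 1
    · -- (π (altL i j m))⁻¹ * S j * π (altL i j m) = (S j * S i)^(2m) * S j
      rw [wordProd_altL, hinv]
      calc (S j * S i) ^ m * S j * (S i * S j) ^ m
          = (S j * S i) ^ m * (S j * (S i * S j) ^ m) := by group
        _ = (S j * S i) ^ m * ((S j * S i) ^ m * S j) := by rw [shuffle]
        _ = (S j * S i) ^ (2 * m) * S j := by rw [two_mul, pow_add]; group

lemma sgn_ris_altL (i j : B) (t : W) :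
    sgn t (ris (altL i j (M i j))) = 1 := by
  have hrel : (S j * S i) ^ M i j = 1 := cs.simple_mul_simple_pow' i j
  rw [ris_altL, List.map_reverse, sgn_reverse, two_mul, List.range_add, List.map_append,
    sgn_append, List.map_map]
  have : List.map ((fun k => (S j * S i) ^ k * S j) ∘ (fun k => M i j + k))
      (List.range (M i j)) = List.map (fun k => (S j * S i) ^ k * S j)
      (List.range (M i j)) := by
    apply List.map_congr_left
    intro k _
    simp only [Function.comp_apply, pow_add, hrel, one_mul]
  rw [this]
  exact Int.units_mul_self _

lemma nu_liftable : M.IsLiftable (nu cs) := by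
  intro i j
  apply Equiv.ext
  rintro ⟨t, ε⟩
  rw [← prod_map_nu_altL, prod_map_nu_apply, wordProd_altL, sgn_ris_altL,
    cs.simple_mul_simple_pow, one_mul]
  simp

/-- The sign homomorphism. -/
noncomputable def phi : W →* Equiv.Perm (W × ℤˣ) := cs.lift ⟨nu cs, nu_liftable cs⟩

lemma phi_wordProd (ω : List B) : phi cs (π ω) = (ω.map (nu cs)).prod := by
  induction ω with
  | nil => simp [cs.wordProd_nil]
  | cons i ω ih =>
    rw [cs.wordProd_cons, map_mul, ih, List.map_cons, List.prod_cons, phi,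
      cs.lift_apply_simple]

lemma sgn_ris_eq_of_wordProd_eq {ω ω' : List B} (h : π ω = π ω') (t : W) :
    sgn t (ris ω) = sgn t (ris ω') := by
  have h3 : (phi cs) (π ω) (t, 1) = (phi cs) (π ω') (t, 1) := by rw [h]
  rw [phi_wordProd, phi_wordProd, prod_map_nu_apply, prod_map_nu_apply] at h3
  have := congrArg Prod.snd h3
  simpa using this


lemma sgn_ris_simple_of_not_descent {w : W} {i : B} (h : ℓ w < ℓ (w * S i))
    {ω : List B} (hω : π ω = w) : sgn (S i) (ris ω) = 1 := by
  obtain ⟨ω₀, hred, hprod⟩ := cs.exists_reduced_word' w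
  rw [sgn_ris_eq_of_wordProd_eq cs (show π ω = π ω₀ by rw [hω, ← hprod])]
  rcases Int.units_eq_one_or (sgn (S i) (ris ω₀)) with h1 | h1
  · exact h1
  exfalso
  have hmem : S i ∈ ris ω₀ := mem_of_sgn_ne_one (by rw [h1]; decide)
  obtain ⟨k, hk, hget⟩ := List.getElem_of_mem hmem
  have hgetD : (ris ω₀).getD k 1 = S i := by
    rw [List.getD_eq_getElem _ _ hk]; exact hget
  have he := cs.wordProd_mul_getD_rightInvSeq ω₀ k
  rw [hgetD, ← hprod] at he
  have hlen : (ω₀.eraseIdx k).length + 1 = ω₀.length := by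
    apply List.length_eraseIdx_add_one
    rwa [cs.length_rightInvSeq] at hk
  have : ℓ (w * S i) ≤ (ω₀.eraseIdx k).length := he ▸ cs.length_wordProd_le _
  have hw : ℓ w = ω₀.length := by rw [hprod]; exact hred
  omega

lemma sgn_map_conj_simple (i : B) (l : List W) :
    sgn (S i) (l.map (MulAut.conj (S i))) = sgn (S i) l := by
  induction l with
  | nil => rfl
  | cons x l ih =>
    rw [List.map_cons, sgn_cons, sgn_cons, ih]
    congr 1
    have hiff : (MulAut.conj (cs.simple i)) x = cs.simple i ↔ x = cs.simple i := by
      rw [MulAut.conj_apply, mul_inv_eq_iff_eq_mul, mul_right_inj]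
    by_cases h : x = S i
    · rw [if_pos h, if_pos (hiff.mpr h)]
    · rw [if_neg h, if_neg (fun hh => h (hiff.mp hh))]

lemma sgn_ris_simple_of_descent {w : W} {i : B} (h : ℓ (w * S i) < ℓ w)
    {ω : List B} (hω : π ω = w) : sgn (S i) (ris ω) = -1 := by
  obtain ⟨ω', hred, hprod⟩ := cs.exists_reduced_word' (w * S i)
  have h2 : ℓ (w * S i) < ℓ (w * S i * S i) := by
    rwa [cs.simple_mul_simple_cancel_right]
  have h3 : sgn (S i) (ris ω') = 1 := sgn_ris_simple_of_not_descent cs h2 hprod.symm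
  have hconcat : π (ω'.concat i) = w := by
    rw [List.concat_eq_append, cs.wordProd_append, ← hprod, cs.wordProd_singleton,
      cs.simple_mul_simple_cancel_right]
  rw [sgn_ris_eq_of_wordProd_eq cs (show π ω = π (ω'.concat i) by rw [hω, hconcat]),
    cs.rightInvSeq_concat, List.concat_eq_append, sgn_append, sgn_map_conj_simple, h3, one_mul,
    sgn_cons, if_pos rfl, sgn_nil, mul_one]

lemma exchange_simple {w : W} {i : B} (h : ℓ (w * S i) < ℓ w) {ω : List B}
    (hω : π ω = w) : ∃ k < ω.length, π (ω.eraseIdx k) = w * S i := by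
  have hs := sgn_ris_simple_of_descent cs h hω
  have hmem : S i ∈ ris ω := mem_of_sgn_ne_one (by rw [hs]; decide)
  obtain ⟨k, hk, hget⟩ := List.getElem_of_mem hmem
  have hk' : k < ω.length := by rwa [cs.length_rightInvSeq] at hk
  refine ⟨k, hk', ?_⟩
  have he := cs.wordProd_mul_getD_rightInvSeq ω k
  rw [List.getD_eq_getElem _ _ hk, hget, hω] at he
  exact he.symm


lemma isReduced_nil : cs.IsReduced ([] : List B) := by
  simp [CoxeterSystem.IsReduced]

lemma deletion [DecidableEq B] (i : B) : ∀ n (ω : List B), ω.length ≤ n →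
    ∃ ω' : List B, cs.IsReduced ω' ∧ π ω' = π ω ∧ ω'.count i ≤ ω.count i := by
  intro n
  induction n with
  | zero =>
    intro ω hω
    have : ω = [] := List.eq_nil_of_length_eq_zero (Nat.le_zero.mp hω)
    exact ⟨[], isReduced_nil cs, by rw [this], by rw [this]⟩
  | succ n ih =>
    intro ω hω
    by_cases hred : cs.IsReduced ω
    · exact ⟨ω, hred, rfl, le_rfl⟩
    have hlen0 : ω ≠ [] := by rintro rfl; exact hred (isReduced_nil cs)
    classical
    have hK : ∃ k, ¬ cs.IsReduced (ω.take (k + 1)) := by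
      refine ⟨ω.length, ?_⟩
      rwa [List.take_of_length_le (by omega)]
    let k0 := Nat.find hK
    have hk0 : ¬ cs.IsReduced (ω.take (k0 + 1)) := Nat.find_spec hK
    have hmin : ∀ m, m < k0 → cs.IsReduced (ω.take (m + 1)) := by
      intro m hm
      have := Nat.find_min hK hm
      simpa using this
    have htake : cs.IsReduced (ω.take k0) := by
      rcases Nat.eq_zero_or_pos k0 with h | h
      · rw [h, List.take_zero]; exact isReduced_nil cs
      · have := hmin (k0 - 1) (by omega)
        rwa [Nat.sub_add_cancel h] at this
    have hk0len : k0 < ω.length := by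
      by_contra hle
      push_neg at hle
      rw [List.take_of_length_le hle] at htake
      exact hred htake
    set b := ω[k0] with hb
    have hsplit : ω.take (k0 + 1) = ω.take k0 ++ [b] := by
      rw [List.take_succ]
      congr 1
      rw [List.getElem?_eq_getElem hk0len]
      rfl
    have hlentake : (ω.take k0).length = k0 := by
      rw [List.length_take]; omega
    have hxlen : ℓ (π (ω.take k0)) = k0 := by
      rw [htake, hlentake]
    have hdesc : ℓ (π (ω.take k0) * S b) < ℓ (π (ω.take k0)) := by
      rcases cs.length_mul_simple (π (ω.take k0)) b with h | h
      · exfalso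
        apply hk0
        unfold CoxeterSystem.IsReduced
        rw [hsplit, cs.wordProd_append, cs.wordProd_singleton, h, hxlen,
          List.length_append, hlentake]
        rfl
      · omega
    obtain ⟨k', hk', he⟩ := exchange_simple cs hdesc rfl
    set ω' := (ω.take k0).eraseIdx k' ++ ω.drop (k0 + 1) with hω'
    have herlen : ((ω.take k0).eraseIdx k').length + 1 = k0 := by
      rw [List.length_eraseIdx_add_one (by omega : k' < (ω.take k0).length), hlentake]
    have hπω' : π ω' = π ω := by
      rw [hω', cs.wordProd_append, he, ← cs.wordProd_singleton, ← cs.wordProd_append,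
        ← cs.wordProd_append, ← hsplit, List.take_append_drop]
    have hlenω' : ω'.length ≤ n := by
      rw [hω', List.length_append, List.length_drop]
      omega
    obtain ⟨ω'', hred'', hπ'', hc''⟩ := ih ω' hlenω'
    refine ⟨ω'', hred'', by rw [hπ'', hπω'], ?_⟩
    have hsub1 : ((ω.take k0).eraseIdx k').count i ≤ (ω.take k0).count i :=
      (List.eraseIdx_sublist _ _).count_le _
    have hcount : ω.count i = (ω.take k0).count i + [b].count i + (ω.drop (k0+1)).count i := by
      conv_lhs => rw [← List.take_append_drop (k0+1) ω]
      rw [List.count_append, hsplit, List.count_append]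
    have hcount' : ω'.count i = ((ω.take k0).eraseIdx k').count i + (ω.drop (k0+1)).count i := by
      rw [hω', List.count_append]
    omega


lemma mem_closure_iff (i : B) (v : W) :
    v ∈ Subgroup.closure (cs.simple '' {j | j ≠ i}) ↔
      ∃ l : List B, (∀ j ∈ l, j ≠ i) ∧ π l = v := by
  constructor
  · intro hv
    induction hv using Subgroup.closure_induction with
    | mem x hx =>
      obtain ⟨j, hj, rfl⟩ := hx
      exact ⟨[j], by simpa using hj, cs.wordProd_singleton j⟩
    | one => exact ⟨[], by simp, cs.wordProd_nil⟩
    | mul x y _ _ hx hy =>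
      obtain ⟨l1, h1, hp1⟩ := hx
      obtain ⟨l2, h2, hp2⟩ := hy
      refine ⟨l1 ++ l2, ?_, by rw [cs.wordProd_append, hp1, hp2]⟩
      intro j hj
      rcases List.mem_append.mp hj with h | h
      exacts [h1 j h, h2 j h]
    | inv x _ hx =>
      obtain ⟨l, h1, hp⟩ := hx
      exact ⟨l.reverse, fun j hj => h1 j (List.mem_reverse.mp hj),
        by rw [cs.wordProd_reverse, hp]⟩
  · rintro ⟨l, hl, rfl⟩
    induction l with
    | nil => simpa using Subgroup.one_mem _
    | cons a l ih =>
      rw [cs.wordProd_cons]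
      exact Subgroup.mul_mem _
        (Subgroup.subset_closure ⟨a, hl a List.mem_cons_self, rfl⟩)
        (ih fun j hj => hl j (List.mem_cons_of_mem a hj))

variable [DecidableEq B]

/-- The minimal number of occurrences of `i` among reduced words for `x`. -/
noncomputable def mm (i : B) (x : W) : ℕ :=
  sInf {c | ∃ l : List B, cs.IsReduced l ∧ cs.wordProd l = x ∧ l.count i = c}

lemma mm_set_nonempty (i : B) (x : W) :
    {c | ∃ l : List B, cs.IsReduced l ∧ cs.wordProd l = x ∧ l.count i = c}.Nonempty := by
  obtain ⟨l, hred, hπ⟩ := cs.exists_reduced_word' x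
  exact ⟨l.count i, l, hred, hπ.symm, rfl⟩

lemma mm_spec (i : B) (x : W) :
    ∃ l : List B, cs.IsReduced l ∧ π l = x ∧ l.count i = mm cs i x :=
  Nat.sInf_mem (mm_set_nonempty cs i x)

lemma mm_le (i : B) {x : W} {l : List B} (hred : cs.IsReduced l) (hπ : π l = x) :
    mm cs i x ≤ l.count i :=
  Nat.sInf_le ⟨l, hred, hπ, rfl⟩

lemma mm_one (i : B) : mm cs i 1 = 0 :=
  Nat.eq_zero_of_le_zero (mm_le cs i (isReduced_nil cs) (cs.wordProd_nil))

lemma mm_le_of_coset {i : B} {g x : W}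
    (h : ∃ v ∈ Subgroup.closure (cs.simple '' {j | j ≠ i}), x = g * v) :
    mm cs i x ≤ mm cs i g := by
  obtain ⟨v, hv, rfl⟩ := h
  obtain ⟨l, hred, hπ, hc⟩ := mm_spec cs i g
  obtain ⟨lv, hlv, hπv⟩ := (mem_closure_iff cs i v).mp hv
  obtain ⟨ω'', hred'', hπ'', hc''⟩ := deletion cs i (l ++ lv).length (l ++ lv) le_rfl
  have hπ2 : π ω'' = g * v := by rw [hπ'', cs.wordProd_append, hπ, hπv]
  have hlv0 : lv.count i = 0 := by
    rw [List.count_eq_zero]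
    intro hmem
    exact hlv i hmem rfl
  calc mm cs i (g * v) ≤ ω''.count i := mm_le cs i hred'' hπ2
    _ ≤ (l ++ lv).count i := hc''
    _ = mm cs i g := by rw [List.count_append, hc, hlv0, Nat.add_zero]

lemma mm_eq_of_coset {i : B} {g x : W}
    (h : ∃ v ∈ Subgroup.closure (cs.simple '' {j | j ≠ i}), x = g * v) :
    mm cs i x = mm cs i g := by
  obtain ⟨v, hv, hx⟩ := h
  refine le_antisymm (mm_le_of_coset cs ⟨v, hv, hx⟩) (mm_le_of_coset cs ⟨v⁻¹, ?_, ?_⟩)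
  · exact Subgroup.inv_mem _ hv
  · rw [hx]; group

lemma mm_succ {i : B} {x : W} (hx : x ≠ 1)
    (hnd : ∀ j, j ≠ i → ¬ cs.IsRightDescent x j) :
    mm cs i (x * S i) + 1 = mm cs i x := by
  obtain ⟨j, hdj⟩ := cs.exists_rightDescent_of_ne_one hx
  have hji : j = i := by
    by_contra hji
    exact hnd j hji hdj
  subst hji
  have hdi : ℓ (x * S j) < ℓ x := hdj
  have hlen : ℓ (x * S j) + 1 = ℓ x := by
    rcases cs.length_mul_simple x j with h | h
    · omega
    · exact h
  -- direction 1 : mm (x * S j) ≤ mm x - 1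
  obtain ⟨l, hred, hπ, hc⟩ := mm_spec cs j x
  have hlne : l ≠ [] := by
    rintro rfl
    rw [cs.wordProd_nil] at hπ
    exact hx hπ.symm
  set b := l.getLast hlne with hbdef
  have hsplit : l.dropLast ++ [b] = l := List.dropLast_append_getLast hlne
  have hπd : π l.dropLast * S b = x := by
    rw [← cs.wordProd_singleton, ← cs.wordProd_append, hsplit, hπ]
  have hπd2 : π l.dropLast = x * S b := by
    rw [← hπd, cs.simple_mul_simple_cancel_right]
  have hlenl : l.length = ℓ x := by rw [← hπ]; exact hred.symm
  have hdb : cs.IsRightDescent x b := by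
    unfold CoxeterSystem.IsRightDescent
    have h1 : ℓ (x * S b) ≤ l.dropLast.length := by
      rw [← hπd2]; exact cs.length_wordProd_le _
    have h2 : l.dropLast.length + 1 = l.length := by
      rw [List.length_dropLast]
      have : l.length ≠ 0 := fun h => hlne (List.eq_nil_of_length_eq_zero h)
      omega
    have h3 : 0 < ℓ x := by
      by_contra h0
      exact hx (cs.length_eq_zero_iff.mp (by omega))
    omega
  have hbi : b = j := by
    by_contra hbi
    exact hnd b hbi hdb
  have hlend : ℓ (x * S b) + 1 = ℓ x := by
    rcases cs.length_mul_simple x b with h | h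
    · exfalso
      have := hdb
      unfold CoxeterSystem.IsRightDescent at this
      omega
    · exact h
  have hredd : cs.IsReduced l.dropLast := by
    unfold CoxeterSystem.IsReduced
    rw [hπd2, List.length_dropLast]
    omega
  have hcountd : l.dropLast.count j + 1 = l.count j := by
    conv_rhs => rw [← hsplit]
    rw [List.count_append, hbi]
    simp
  have hd1 : mm cs j (x * S j) ≤ l.dropLast.count j :=
    mm_le cs j hredd (by rw [hπd2, hbi])
  -- direction 2
  obtain ⟨l', hred', hπ', hc'⟩ := mm_spec cs j (x * S j)
  have hπ2 : π (l' ++ [j]) = x := by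
    rw [cs.wordProd_append, cs.wordProd_singleton, hπ', cs.simple_mul_simple_cancel_right]
  have hred2 : cs.IsReduced (l' ++ [j]) := by
    unfold CoxeterSystem.IsReduced
    have h := hred'
    unfold CoxeterSystem.IsReduced at h
    rw [hπ'] at h
    rw [hπ2, List.length_append, List.length_singleton]
    rw [hbi] at hlend
    omega
  have hd2 : mm cs j x ≤ l'.count j + 1 := by
    have := mm_le cs j hred2 hπ2
    rwa [List.count_append, List.count_singleton', if_pos rfl] at this
  omega


lemma eq_one_of_mm_zero {i : B} {g x : W}
    (hcos : ∃ v ∈ Subgroup.closure (cs.simple '' {j | j ≠ i}), x = g * v)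
    (hmin : ∀ u' : W, (∃ v ∈ Subgroup.closure (cs.simple '' {j | j ≠ i}), u' = g * v) →
      cs.length x ≤ cs.length u')
    (h : mm cs i x = 0) : x = 1 := by
  obtain ⟨l, hred, hπ, hc⟩ := mm_spec cs i x
  rw [h, List.count_eq_zero] at hc
  have hxmem : x ∈ Subgroup.closure (cs.simple '' {j | j ≠ i}) := by
    rw [← hπ]
    apply (mem_closure_iff cs i _).mpr
    refine ⟨l, ?_, rfl⟩
    intro j hj hji
    rw [hji] at hj
    exact hc hj
  obtain ⟨v, hv, hxv⟩ := hcos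
  have hmem2 : v * x⁻¹ ∈ Subgroup.closure (cs.simple '' {j | j ≠ i}) :=
    Subgroup.mul_mem _ hv (Subgroup.inv_mem _ hxmem)
  have h1 : (1 : W) = g * (v * x⁻¹) := by rw [← mul_assoc, ← hxv, mul_inv_cancel]
  have h2 : cs.length x ≤ cs.length 1 := hmin 1 ⟨v * x⁻¹, hmem2, h1⟩
  rw [cs.length_one, Nat.le_zero] at h2
  exact cs.length_eq_zero_iff.mp h2

end CoxAux

/-- For a finite Coxeter group, the minimum number of occurrences of `sᵢ` among reduced
words of `w` equals the number of steps of the algorithm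
`w⁽⁰⁾ = w^{Jᵢ}`, `w⁽ᵏ⁺¹⁾ = (w⁽ᵏ⁾ sᵢ)^{Jᵢ}` (while `w⁽ᵏ⁾ ≠ 1`) to reach the identity. -/
theorem stmt18 {B : Type*} [DecidableEq B] {W : Type*} [Group W] [Finite W]
    {M : CoxeterMatrix B} (cs : CoxeterSystem M W) (i : B) (w : W)
    (f : ℕ → W) (h0 : IsMinCosetRep cs i w (f 0))
    (hstep : ∀ k, f k ≠ 1 → IsMinCosetRep cs i (f k * cs.simple i) (f (k + 1)))
    (hstop : ∀ k, f k = 1 → f (k + 1) = 1) :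
    sInf {c | ∃ l : List B, cs.IsReduced l ∧ cs.wordProd l = w ∧ l.count i = c} =
      sInf {k | f k = 1} := by
  classical
  have hLHS : sInf {c | ∃ l : List B, cs.IsReduced l ∧ cs.wordProd l = w ∧ l.count i = c}
      = CoxAux.mm cs i w := rfl
  set m := CoxAux.mm cs i w with hm
  have key : ∀ k, k ≤ m → CoxAux.mm cs i (f k) = m - k ∧ ∃ g, IsMinCosetRep cs i g (f k) := by
    intro k
    induction k with
    | zero =>
      intro _
      refine ⟨?_, ⟨w, h0⟩⟩
      rw [Nat.sub_zero]
      exact CoxAux.mm_eq_of_coset cs h0.1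
    | succ k ih =>
      intro hk
      obtain ⟨hmm, g, hg⟩ := ih (by omega)
      have hfk : f k ≠ 1 := by
        intro h1
        rw [h1, CoxAux.mm_one] at hmm
        omega
      have hnd : ∀ j, j ≠ i → ¬ cs.IsRightDescent (f k) j := by
        intro j hj hd
        obtain ⟨⟨v, hv, hfkv⟩, hminv⟩ := hg
        have hle : cs.length (f k) ≤ cs.length (f k * cs.simple j) := by
          apply hminv
          refine ⟨v * cs.simple j,
            Subgroup.mul_mem _ hv (Subgroup.subset_closure ⟨j, hj, rfl⟩), ?_⟩
          rw [hfkv, mul_assoc]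
        unfold CoxeterSystem.IsRightDescent at hd
        omega
      have hstep' := hstep k hfk
      have h1 : CoxAux.mm cs i (f (k + 1)) = CoxAux.mm cs i (f k * cs.simple i) :=
        CoxAux.mm_eq_of_coset cs hstep'.1
      have h2 := CoxAux.mm_succ cs hfk hnd
      exact ⟨by omega, ⟨f k * cs.simple i, hstep'⟩⟩
  have hfm : f m = 1 := by
    obtain ⟨hmm, g, hg⟩ := key m le_rfl
    exact CoxAux.eq_one_of_mm_zero cs hg.1 hg.2 (by omega)
  have hne : ∀ k, k < m → f k ≠ 1 := by
    intro k hk h1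
    obtain ⟨hmm, -⟩ := key k (le_of_lt hk)
    rw [h1, CoxAux.mm_one] at hmm
    omega
  rw [hLHS]
  have hSne : {k | f k = 1}.Nonempty := ⟨m, hfm⟩
  apply le_antisymm
  · have hmem := Nat.sInf_mem hSne
    by_contra hlt
    push_neg at hlt
    exact hne _ hlt hmem
  · exact Nat.sInf_le hfm
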